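/- Let n be a nonnegative integer and let a, b be complex numbers with (a)_n ≠ 0, (1+a+n)_n ≠ 0, (1+a−b)_n ≠ 0, and (1−b−n)_n ≠ 0. Then the sum of the first n+1 terms of the series _3F_2(a/2, (a+1)/2, b ; a, 1+a+n ; 4), namely Σ_{k=0}^{n} [(a/2)_k ((a+1)/2)_k (b)_k / (k! (a)_k (1+a+n)_k)] 4^k, equals [(b)_n / n!] · _4F_3(−n, (1+a−b)/2, (2+a−b)/2, 1 ; 1+a−b, 1−b−n, 1+a+n ; 4). -/
import Mathlib


open Finset

/-- The rising factorial (Pochhammer symbol) `(a)_k = a(a+1)⋯(a+k-1)`. -/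
noncomputable def poch (a : ℂ) (k : ℕ) : ℂ := ∏ i ∈ Finset.range k, (a + i)

lemma poch_zero (a : ℂ) : poch a 0 = 1 := by simp [poch]

lemma poch_succ (a : ℂ) (k : ℕ) : poch a (k+1) = poch a k * (a + k) := by
  simp [poch, Finset.prod_range_succ]

lemma poch_front (a : ℂ) (k : ℕ) : poch a (k+1) = a * poch (a+1) k := by
  rw [poch, Finset.prod_range_succ', mul_comm]
  congr 1
  · simp
  · apply Finset.prod_congr rfl
    intro i _
    push_cast; ring

lemma poch_add (a : ℂ) (m n : ℕ) : poch a (m+n) = poch a m * poch (a+m) n := by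
  rw [poch, Finset.prod_range_add]
  congr 1
  apply Finset.prod_congr rfl
  intro i _
  push_cast; ring

lemma poch_prefix_ne {a : ℂ} {n : ℕ} (h : poch a n ≠ 0) {m : ℕ} (hm : m ≤ n) :
    poch a m ≠ 0 := by
  have := poch_add a m (n - m)
  rw [Nat.add_sub_cancel' hm] at this
  intro h0
  exact h (by rw [this, h0, zero_mul])

lemma poch_factor_ne {a : ℂ} {n : ℕ} (h : poch a n ≠ 0) {i : ℕ} (hi : i < n) :
    a + (i : ℂ) ≠ 0 := by
  intro h0
  exact h (Finset.prod_eq_zero (Finset.mem_range.2 hi) h0)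

lemma fact_cast_ne (k : ℕ) : ((Nat.factorial k : ℕ) : ℂ) ≠ 0 := by
  exact_mod_cast Nat.factorial_ne_zero k

lemma poch_nat (m : ℕ) : ∀ k : ℕ, poch ((m : ℂ) + 1) k * (Nat.factorial m : ℂ)
    = (Nat.factorial (m + k) : ℂ) := by
  intro k
  induction k with
  | zero => simp [poch_zero]
  | succ k ih =>
      rw [poch_succ, mul_right_comm, ih, show m + (k+1) = (m+k)+1 from rfl,
        Nat.factorial_succ]
      push_cast; ring

lemma poch_one_eq (k : ℕ) : poch 1 k = (Nat.factorial k : ℂ) := by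
  have := poch_nat 0 k
  simpa using this

lemma poch_reflect (x : ℂ) (k : ℕ) : poch x k = (-1)^k * poch (1 - x - k) k := by
  rw [poch, poch]
  rw [← Finset.prod_range_reflect (fun i => x + (i:ℂ)) k]
  have : ∀ i ∈ Finset.range k, x + ((k - 1 - i : ℕ) : ℂ) = -1 * ((1 - x - k) + i) := by
    intro i hi
    have hik : i ≤ k - 1 := Nat.le_sub_one_of_lt (Finset.mem_range.1 hi)
    have hk1 : (1:ℕ) ≤ k := Nat.one_le_iff_ne_zero.2 (by rintro rfl; exact absurd (Finset.mem_range.1 hi) (by omega))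
    have : ((k - 1 - i : ℕ) : ℂ) = (k : ℂ) - 1 - i := by
      push_cast [Nat.cast_sub hik, Nat.cast_sub hk1]
      ring
    rw [this]; ring
  rw [Finset.prod_congr rfl this, Finset.prod_mul_distrib, Finset.prod_const,
    Finset.card_range]

lemma keyE (n k : ℕ) (hk : k ≤ n) (b : ℂ) :
    poch b n = (-1)^k * poch b (n-k) * poch (1 - b - n) k := by
  have h1 : poch b n = poch b (n-k) * poch (b + (n-k : ℕ)) k := by
    rw [← poch_add, Nat.sub_add_cancel hk]
  have h2 : poch (b + ((n-k : ℕ) : ℂ)) k = (-1)^k * poch (1 - b - n) k := by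
    rw [poch_reflect (b + ((n-k:ℕ):ℂ)) k]
    congr 2
    rw [Nat.cast_sub hk]; ring
  rw [h1, h2]; ring

lemma keyF (n k : ℕ) (hk : k ≤ n) :
    poch (-(n:ℂ)) k * ((Nat.factorial (n-k) : ℕ) : ℂ) = (-1)^k * (Nat.factorial n : ℂ) := by
  have h1 : poch (-(n:ℂ)) k = (-1)^k * poch (((n-k:ℕ):ℂ) + 1) k := by
    rw [poch_reflect (-(n:ℂ)) k]
    congr 2
    rw [Nat.cast_sub hk]; ring
  rw [h1, mul_assoc, poch_nat, Nat.sub_add_cancel hk]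

lemma half (a : ℂ) : ∀ k : ℕ, poch (a/2) k * poch ((a+1)/2) k * 4^k = poch a (2*k) := by
  intro k
  induction k with
  | zero => simp [poch_zero]
  | succ k ih =>
      have h2 : 2 * (k+1) = (2*k) + 1 + 1 := by ring
      rw [h2, poch_succ, poch_succ, poch_succ, poch_succ, pow_succ]
      rw [← ih]
      push_cast
      ring

lemma hC_of {a : ℂ} {n : ℕ} (hc : poch (a+(n:ℂ)+2) (n+1) ≠ 0) : (a+(n:ℂ)+2) ≠ 0 := by
  have := poch_factor_ne hc (Nat.succ_pos n)
  simpa using this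

lemma hq_of {a : ℂ} {n k : ℕ} (hc : poch (a+(n:ℂ)+2) (n+1) ≠ 0) (hk : k ≤ n) :
    poch (a+(n:ℂ)+3) k ≠ 0 := by
  have h1 : poch (a+(n:ℂ)+2) (k+1) ≠ 0 := poch_prefix_ne hc (by omega)
  rw [poch_front, show (a+(n:ℂ)+2+1) = a+(n:ℂ)+3 from by ring] at h1
  exact (mul_ne_zero_iff.1 h1).2

lemma Lstep {n k : ℕ} (a b : ℂ) (hc : poch (a+(n:ℂ)+2) (n+1) ≠ 0) (hk : k ≤ n) :
    poch (a+(k:ℂ)+1) (k+1) * poch b (k+1) / ((Nat.factorial (k+1) : ℂ) * poch (a+(n:ℂ)+2) (k+1))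
    = poch (a+(k:ℂ)+2) (k+1) * poch b (k+1) / ((Nat.factorial (k+1) : ℂ) * poch (a+(n:ℂ)+2) (k+1))
      - b/(a+(n:ℂ)+2) * (poch (a+(k:ℂ)+2) k * poch (b+1) k / ((Nat.factorial k : ℂ) * poch (a+(n:ℂ)+3) k)) := by
  have hC := hC_of hc
  have hq := hq_of hc hk
  have hk1 : ((k:ℂ)+1) ≠ 0 := Nat.cast_add_one_ne_zero k
  have e1 : poch (a+(k:ℂ)+1) (k+1) = (a+(k:ℂ)+1) * poch (a+(k:ℂ)+2) k := by
    rw [poch_front, show (a+(k:ℂ)+1+1) = a+(k:ℂ)+2 from by ring]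
  have e2 : poch (a+(k:ℂ)+2) (k+1) = poch (a+(k:ℂ)+2) k * (a+(k:ℂ)+2+k) := poch_succ _ _
  have e3 : poch b (k+1) = b * poch (b+1) k := poch_front b k
  have e4 : poch (a+(n:ℂ)+2) (k+1) = (a+(n:ℂ)+2) * poch (a+(n:ℂ)+3) k := by
    rw [poch_front, show (a+(n:ℂ)+2+1) = a+(n:ℂ)+3 from by ring]
  have e5 : ((Nat.factorial (k+1) : ℕ) : ℂ) = ((k:ℂ)+1) * (Nat.factorial k : ℂ) := by
    rw [Nat.factorial_succ]; push_cast; ring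
  rw [e1, e2, e3, e4, e5]
  field_simp [hC, hq, hk1, fact_cast_ne k]
  ring

lemma Rstep {n k : ℕ} (a b : ℂ) (hc : poch (a+(n:ℂ)+2) (n+1) ≠ 0) (hk : k ≤ n) :
    poch b (n-k) * poch (a-b+(k:ℂ)+2) (k+1) / ((Nat.factorial (n-k) : ℂ) * poch (a+(n:ℂ)+2) (k+1))
    = poch b (n-k) * poch (a-b+(k:ℂ)+2) k / ((Nat.factorial (n-k) : ℂ) * poch (a+(n:ℂ)+2) k)
      - b/(a+(n:ℂ)+2) * (poch (b+1) (n-k) * poch (a-b+(k:ℂ)+2) k / ((Nat.factorial (n-k) : ℂ) * poch (a+(n:ℂ)+3) k)) := by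
  have hC := hC_of hc
  have hq := hq_of hc hk
  have hp : poch (a+(n:ℂ)+2) k ≠ 0 := poch_prefix_ne hc (by omega)
  have e2 : poch (a-b+(k:ℂ)+2) (k+1) = poch (a-b+(k:ℂ)+2) k * (a-b+(k:ℂ)+2+k) := poch_succ _ _
  have e4 : poch (a+(n:ℂ)+2) (k+1) = (a+(n:ℂ)+2) * poch (a+(n:ℂ)+3) k := by
    rw [poch_front, show (a+(n:ℂ)+2+1) = a+(n:ℂ)+3 from by ring]
  have hrel : (a+(n:ℂ)+2) * poch (a+(n:ℂ)+3) k = poch (a+(n:ℂ)+2) k * (a+(n:ℂ)+2+k) := by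
    rw [← e4, poch_succ]
  have hrelb : b * poch (b+1) (n-k) = poch b (n-k) * (b + ((n-k:ℕ):ℂ)) := by
    rw [← poch_front, poch_succ]
  have hcast : ((n-k:ℕ):ℂ) = (n:ℂ) - k := by
    push_cast [Nat.cast_sub hk]; ring
  rw [hcast] at hrelb
  have hF : ((Nat.factorial (n-k) : ℕ) : ℂ) ≠ 0 := fact_cast_ne (n-k)
  rw [e2, e4, div_mul_div_comm, div_sub_div _ _ (mul_ne_zero hF hp) (mul_ne_zero hC (mul_ne_zero hF hq)),
    div_eq_div_iff (mul_ne_zero hF (mul_ne_zero hC hq))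
      (mul_ne_zero (mul_ne_zero hF hp) (mul_ne_zero hC (mul_ne_zero hF hq)))]
  linear_combination (-((Nat.factorial (n-k):ℂ))^2 * (a+(n:ℂ)+2) * poch (a+(n:ℂ)+3) k * poch b (n-k) * poch (a-b+(k:ℂ)+2) k) * hrel + (((Nat.factorial (n-k):ℂ))^2 * (a+(n:ℂ)+2) * poch (a+(n:ℂ)+3) k * poch (a+(n:ℂ)+2) k * poch (a-b+(k:ℂ)+2) k) * hrelb

noncomputable def SL (n : ℕ) (a b : ℂ) : ℂ :=
  ∑ k ∈ range (n+1), poch (a+(k:ℂ)) k * poch b k / ((Nat.factorial k : ℂ) * poch (1+a+(n:ℂ)) k)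

noncomputable def SR (n : ℕ) (a b : ℂ) : ℂ :=
  ∑ k ∈ range (n+1),
    poch b (n-k) * poch (1+a-b+(k:ℂ)) k / ((Nat.factorial (n-k) : ℂ) * poch (1+a+(n:ℂ)) k)

lemma SL_rec (n : ℕ) (a b : ℂ) (h : poch (a+(n:ℂ)+2) (n+1) ≠ 0) :
    SL (n+1) a b = SL n (a+1) b + poch b (n+1) / (Nat.factorial (n+1) : ℂ)
      - b/(a+(n:ℂ)+2) * SL n (a+2) (b+1) := by
  unfold SL
  rw [show (1+a+((n+1:ℕ):ℂ)) = a+(n:ℂ)+2 from by push_cast; ring,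
      show (1+(a+1)+((n:ℕ):ℂ)) = a+(n:ℂ)+2 from by ring,
      show (1+(a+2)+((n:ℕ):ℂ)) = a+(n:ℂ)+3 from by ring]
  rw [Finset.sum_range_succ' _ (n+1)]
  have hsplit : ∀ i ∈ range (n+1),
      poch (a+((i+1:ℕ):ℂ)) (i+1) * poch b (i+1) /
        ((Nat.factorial (i+1) : ℂ) * poch (a+(n:ℂ)+2) (i+1))
      = poch ((a+1)+((i+1:ℕ):ℂ)) (i+1) * poch b (i+1) /
          ((Nat.factorial (i+1) : ℂ) * poch (a+(n:ℂ)+2) (i+1))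
        - b/(a+(n:ℂ)+2) * (poch ((a+2)+((i:ℕ):ℂ)) i * poch (b+1) i /
            ((Nat.factorial i : ℂ) * poch (a+(n:ℂ)+3) i)) := by
    intro i hi
    have hi' : i ≤ n := Nat.lt_succ_iff.mp (Finset.mem_range.mp hi)
    rw [show (a+((i+1:ℕ):ℂ)) = a+(i:ℂ)+1 from by push_cast; ring,
        show ((a+1)+((i+1:ℕ):ℂ)) = a+(i:ℂ)+2 from by push_cast; ring,
        show ((a+2)+((i:ℕ):ℂ)) = a+(i:ℂ)+2 from by ring]
    exact Lstep a b h hi'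
  rw [Finset.sum_congr rfl hsplit, Finset.sum_sub_distrib, ← Finset.mul_sum]
  have hG0 : poch ((a+1)+((0:ℕ):ℂ)) 0 * poch b 0 /
      ((Nat.factorial 0 : ℂ) * poch (a+(n:ℂ)+2) 0) = 1 := by
    simp [poch_zero]
  have hGn1 : poch ((a+1)+((n+1:ℕ):ℂ)) (n+1) * poch b (n+1) /
      ((Nat.factorial (n+1) : ℂ) * poch (a+(n:ℂ)+2) (n+1))
      = poch b (n+1) / (Nat.factorial (n+1) : ℂ) := by
    rw [show ((a+1)+((n+1:ℕ):ℂ)) = a+(n:ℂ)+2 from by push_cast; ring]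
    rw [mul_comm ((Nat.factorial (n+1) : ℕ) : ℂ) (poch (a+(n:ℂ)+2) (n+1)),
      mul_div_mul_left _ _ h]
  have h1 := Finset.sum_range_succ'
    (fun k => poch ((a+1)+(k:ℂ)) k * poch b k /
      ((Nat.factorial k : ℂ) * poch (a+(n:ℂ)+2) k)) (n+1)
  have h2 := Finset.sum_range_succ
    (fun k => poch ((a+1)+(k:ℂ)) k * poch b k /
      ((Nat.factorial k : ℂ) * poch (a+(n:ℂ)+2) k)) (n+1)
  beta_reduce at h1 h2
  rw [hG0] at h1
  rw [hGn1] at h2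
  have hf0 : poch (a+((0:ℕ):ℂ)) 0 * poch b 0 /
      ((Nat.factorial 0 : ℂ) * poch (a+(n:ℂ)+2) 0) = 1 := by
    simp [poch_zero]
  rw [hf0]
  linear_combination h2 - h1

lemma SR_rec (n : ℕ) (a b : ℂ) (h : poch (a+(n:ℂ)+2) (n+1) ≠ 0) :
    SR (n+1) a b = SR n (a+1) b + poch b (n+1) / (Nat.factorial (n+1) : ℂ)
      - b/(a+(n:ℂ)+2) * SR n (a+2) (b+1) := by
  unfold SR
  rw [show (1+a+((n+1:ℕ):ℂ)) = a+(n:ℂ)+2 from by push_cast; ring,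
      show (1+(a+1)+((n:ℕ):ℂ)) = a+(n:ℂ)+2 from by ring,
      show (1+(a+2)+((n:ℕ):ℂ)) = a+(n:ℂ)+3 from by ring]
  rw [Finset.sum_range_succ' _ (n+1)]
  have hsplit : ∀ i ∈ range (n+1),
      poch b (n+1-(i+1)) * poch (1+a-b+((i+1:ℕ):ℂ)) (i+1) /
        ((Nat.factorial (n+1-(i+1)) : ℂ) * poch (a+(n:ℂ)+2) (i+1))
      = poch b (n-i) * poch (1+(a+1)-b+((i:ℕ):ℂ)) i /
          ((Nat.factorial (n-i) : ℂ) * poch (a+(n:ℂ)+2) i)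
        - b/(a+(n:ℂ)+2) * (poch (b+1) (n-i) * poch (1+(a+2)-(b+1)+((i:ℕ):ℂ)) i /
            ((Nat.factorial (n-i) : ℂ) * poch (a+(n:ℂ)+3) i)) := by
    intro i hi
    have hi' : i ≤ n := Nat.lt_succ_iff.mp (Finset.mem_range.mp hi)
    rw [show n+1-(i+1) = n-i from by omega,
        show (1+a-b+((i+1:ℕ):ℂ)) = a-b+(i:ℂ)+2 from by push_cast; ring,
        show (1+(a+1)-b+((i:ℕ):ℂ)) = a-b+(i:ℂ)+2 from by ring,
        show (1+(a+2)-(b+1)+((i:ℕ):ℂ)) = a-b+(i:ℂ)+2 from by ring]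
    exact Rstep a b h hi'
  rw [Finset.sum_congr rfl hsplit, Finset.sum_sub_distrib, ← Finset.mul_sum]
  have hf0 : poch b (n+1-0) * poch (1+a-b+((0:ℕ):ℂ)) 0 /
      ((Nat.factorial (n+1-0) : ℂ) * poch (a+(n:ℂ)+2) 0) = poch b (n+1) / (Nat.factorial (n+1) : ℂ) := by
    simp [poch_zero]
  rw [hf0]
  ring

lemma core : ∀ (n : ℕ) (a b : ℂ), poch (1+a+(n:ℂ)) n ≠ 0 → SL n a b = SR n a b := by
  intro n
  induction n with
  | zero =>
      intro a b _
      unfold SL SR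
      simp [poch_zero]
  | succ n ih =>
      intro a b h
      have hC : poch (a+(n:ℂ)+2) (n+1) ≠ 0 := by
        rw [show (a+(n:ℂ)+2) = 1+a+((n+1:ℕ):ℂ) from by push_cast; ring]
        exact h
      have h1 : poch (1+(a+1)+(n:ℂ)) n ≠ 0 := by
        rw [show (1+(a+1)+((n:ℕ):ℂ)) = a+(n:ℂ)+2 from by ring]
        exact poch_prefix_ne hC (by omega)
      have h2 : poch (1+(a+2)+(n:ℂ)) n ≠ 0 := by
        rw [show (1+(a+2)+((n:ℕ):ℂ)) = a+(n:ℂ)+3 from by ring]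
        exact hq_of hC le_rfl
      rw [SL_rec n a b hC, SR_rec n a b hC, ih (a+1) b h1, ih (a+2) (b+1) h2]


theorem stmt_11 (n : ℕ) (a b : ℂ)
    (ha : poch a n ≠ 0) (han : poch (1 + a + (n : ℂ)) n ≠ 0)
    (hab : poch (1 + a - b) n ≠ 0) (hb : poch (1 - b - (n : ℂ)) n ≠ 0) :
    ∑ k ∈ range (n + 1),
      (poch (a / 2) k * poch ((a + 1) / 2) k * poch b k) /
        ((Nat.factorial k : ℂ) * poch a k * poch (1 + a + (n : ℂ)) k) * (4 : ℂ) ^ k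
    = poch b n / (Nat.factorial n : ℂ) *
      ∑ k ∈ range (n + 1),
        (poch (-(n : ℂ)) k * poch ((1 + a - b) / 2) k * poch ((2 + a - b) / 2) k *
          poch 1 k) /
          ((Nat.factorial k : ℂ) * poch (1 + a - b) k * poch (1 - b - (n : ℂ)) k *
            poch (1 + a + (n : ℂ)) k) * (4 : ℂ) ^ k := by
  have hLHS : ∀ k ∈ range (n+1),
      (poch (a / 2) k * poch ((a + 1) / 2) k * poch b k) /
        ((Nat.factorial k : ℂ) * poch a k * poch (1 + a + (n : ℂ)) k) * (4 : ℂ) ^ k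
      = poch (a+(k:ℂ)) k * poch b k / ((Nat.factorial k : ℂ) * poch (1+a+(n:ℂ)) k) := by
    intro k hk
    have hk' : k ≤ n := Nat.lt_succ_iff.mp (Finset.mem_range.mp hk)
    have H : poch (a/2) k * poch ((a+1)/2) k * (4:ℂ)^k = poch a k * poch (a+(k:ℂ)) k := by
      rw [half a k, two_mul, poch_add]
    have hak := poch_prefix_ne ha hk'
    have hnk := poch_prefix_ne han hk'
    have hfk := fact_cast_ne k
    rw [show (poch (a/2) k * poch ((a+1)/2) k * poch b k) /
        ((Nat.factorial k : ℂ) * poch a k * poch (1+a+(n:ℂ)) k) * (4:ℂ)^k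
        = (poch (a/2) k * poch ((a+1)/2) k * (4:ℂ)^k) * poch b k /
        ((Nat.factorial k : ℂ) * poch a k * poch (1+a+(n:ℂ)) k) from by ring, H]
    rw [div_eq_div_iff (mul_ne_zero (mul_ne_zero hfk hak) hnk) (mul_ne_zero hfk hnk)]
    ring
  have hRHS : ∀ k ∈ range (n+1),
      poch b n / (Nat.factorial n : ℂ) *
      ((poch (-(n : ℂ)) k * poch ((1 + a - b) / 2) k * poch ((2 + a - b) / 2) k *
          poch 1 k) /
          ((Nat.factorial k : ℂ) * poch (1 + a - b) k * poch (1 - b - (n : ℂ)) k *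
            poch (1 + a + (n : ℂ)) k) * (4 : ℂ) ^ k)
      = poch b (n-k) * poch (1+a-b+(k:ℂ)) k /
          ((Nat.factorial (n-k) : ℂ) * poch (1+a+(n:ℂ)) k) := by
    intro k hk
    have hk' : k ≤ n := Nat.lt_succ_iff.mp (Finset.mem_range.mp hk)
    have H2 : poch ((1+a-b)/2) k * poch ((2+a-b)/2) k * (4:ℂ)^k
        = poch (1+a-b) k * poch (1+a-b+(k:ℂ)) k := by
      rw [show ((2+a-b)/2 : ℂ) = ((1+a-b)+1)/2 from by ring, half (1+a-b) k, two_mul, poch_add]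
    have h4 := keyF n k hk'
    have h3 := keyE n k hk' b
    have hsq : ((-1:ℂ))^k * ((-1:ℂ))^k = 1 := by
      rw [← mul_pow]; norm_num
    have H34 : poch (-(n:ℂ)) k * poch b n * ((Nat.factorial (n-k) : ℕ) : ℂ)
        = ((Nat.factorial n : ℕ) : ℂ) * poch b (n-k) * poch (1-b-(n:ℂ)) k := by
      linear_combination poch b n * h4 + ((-1:ℂ))^k * ((Nat.factorial n : ℕ):ℂ) * h3
        + (((Nat.factorial n : ℕ):ℂ) * poch b (n-k) * poch (1-b-(n:ℂ)) k) * hsq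
    have hfn := fact_cast_ne n
    have hfk := fact_cast_ne k
    have hfnk := fact_cast_ne (n-k)
    have habk := poch_prefix_ne hab hk'
    have hbnk := poch_prefix_ne hb hk'
    have hank := poch_prefix_ne han hk'
    rw [poch_one_eq]
    rw [show poch b n / (Nat.factorial n : ℂ) *
      ((poch (-(n : ℂ)) k * poch ((1 + a - b) / 2) k * poch ((2 + a - b) / 2) k *
          (Nat.factorial k : ℂ)) /
          ((Nat.factorial k : ℂ) * poch (1 + a - b) k * poch (1 - b - (n : ℂ)) k *
            poch (1 + a + (n : ℂ)) k) * (4 : ℂ) ^ k)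
      = poch b n * poch (-(n:ℂ)) k * (poch ((1+a-b)/2) k * poch ((2+a-b)/2) k * (4:ℂ)^k) *
          (Nat.factorial k : ℂ) /
        ((Nat.factorial n : ℂ) * ((Nat.factorial k : ℂ) * poch (1 + a - b) k *
          poch (1 - b - (n : ℂ)) k * poch (1 + a + (n : ℂ)) k)) from by ring, H2]
    rw [div_eq_div_iff
      (mul_ne_zero hfn (mul_ne_zero (mul_ne_zero (mul_ne_zero hfk habk) hbnk) hank))
      (mul_ne_zero hfnk hank)]
    linear_combination (poch (1+a-b) k * poch (1+a-b+(k:ℂ)) k * ((Nat.factorial k : ℕ):ℂ)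
      * poch (1+a+(n:ℂ)) k) * H34
  rw [Finset.sum_congr rfl hLHS, Finset.mul_sum, Finset.sum_congr rfl hRHS]
  have := core n a b han
  unfold SL SR at this
  exact this
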